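/- There is an isomorphism of abelian groups ℤ × ℤ/4 × ℤ/2 ≅ GW(ℤ/8) sending (1, 0, 0) to [1], (0, 1, 0) to ⟨⟨3⟩⟩ = [1] − [3], and (0, 0, 1) to ⟨⟨5⟩⟩ = [1] − [5]. -/

import Mathlib

set_option maxHeartbeats 1000000
set_option synthInstance.maxHeartbeats 400000

noncomputable section

/-- The subgroup of squares of units of a commutative ring. -/
def squareUnits (R : Type) [CommRing R] : Subgroup Rˣ :=
  (powMonoidHom 2 : Rˣ →* Rˣ).range

/-- The group of square classes `Rˣ/(Rˣ)²`. -/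
def SqCl (R : Type) [CommRing R] : Type := Rˣ ⧸ squareUnits R

instance (R : Type) [CommRing R] : CommGroup (SqCl R) :=
  QuotientGroup.Quotient.commGroup (squareUnits R)

/-- The square class `[a]` of a unit `a`. -/
def cls {R : Type} [CommRing R] (a : Rˣ) : SqCl R := QuotientGroup.mk a

/-- The group ring `ℤ[Rˣ/(Rˣ)²]`. -/
abbrev GRing (R : Type) [CommRing R] := MonoidAlgebra ℤ (SqCl R)

/-- The generator `[a]` of the group ring, for a unit `a`. -/
def gen {R : Type} [CommRing R] (a : Rˣ) : GRing R :=
  MonoidAlgebra.of ℤ (SqCl R) (cls a)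

/-- The set of relations defining the Grothendieck–Witt ring of a (connected semi-)local ring:
`([a₁]+[a₂]+[a₃]+[a₄]) − ([b₁]+[b₂]+[b₃]+[b₄])` whenever there exists `P ∈ GL₄(R)` with
`P ⬝ diag(a₁,…,a₄) ⬝ Pᵀ = diag(b₁,…,b₄)`. -/
def gwRel (R : Type) [CommRing R] : Set (GRing R) :=
  {x | ∃ (a b : Fin 4 → Rˣ) (P : Matrix (Fin 4) (Fin 4) R),
    IsUnit P.det ∧
    P * Matrix.diagonal (fun i => (a i : R)) * P.transpose =
      Matrix.diagonal (fun i => (b i : R)) ∧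
    x = (∑ i, gen (a i)) - (∑ i, gen (b i))}

/-- The (symmetric) Grothendieck–Witt ring of `R`, presented à la Knebusch–Rosenberg–Ware. -/
abbrev GW (R : Type) [CommRing R] := GRing R ⧸ Ideal.span (gwRel R)

/-- The class `[a] ∈ GW(R)` of a unit `a`. -/
def gw {R : Type} [CommRing R] (a : Rˣ) : GW R :=
  Ideal.Quotient.mk (Ideal.span (gwRel R)) (gen a)

/-- The (symmetric) Witt ring of `R` : the quotient of `GW(R)` by the ideal generated by the
hyperbolic element `[1] + [-1]`. -/
abbrev Wr (R : Type) [CommRing R] := GW R ⧸ Ideal.span {gw (R := R) 1 + gw (-1)}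

/-- The class in the Witt ring of a unit `a`. -/
def wcl {R : Type} [CommRing R] (a : Rˣ) : Wr R :=
  Ideal.Quotient.mk (Ideal.span {gw (R := R) 1 + gw (-1)}) (gw a)

/-! ### Auxiliary material for `GW (ZMod 8)` -/

namespace GW8

open Complex Matrix

/-- The target abelian group. -/
abbrev A : Type := ℤ × ZMod 4 × ZMod 2

/-- The invariant attached to a unit of `ZMod 8`. -/
def u (a : (ZMod 8)ˣ) : A :=
  (1, if (a : ZMod 8) = 3 ∨ (a : ZMod 8) = 7 then 3 else 0,
      if (a : ZMod 8) = 5 ∨ (a : ZMod 8) = 7 then 1 else 0)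

lemma unit_sq : ∀ x : (ZMod 8)ˣ, x ^ 2 = 1 := by decide

/-- lift of `u` to square classes -/
def v : SqCl (ZMod 8) → A := fun q =>
  Quotient.liftOn' q u (by
    intro x y hxy
    have : x = y := by
      obtain ⟨z, hz⟩ := (QuotientGroup.leftRel_apply).mp hxy
      have hz1 : x⁻¹ * y = 1 := by rw [← hz]; simpa [powMonoidHom] using unit_sq z
      have := mul_eq_one_iff_eq_inv.mp hz1
      simpa using this
    rw [this])

lemma v_cls (a : (ZMod 8)ˣ) : v (cls a) = u a := rfl

/-- The invariant additive map on the group ring. -/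
def phi : GRing (ZMod 8) →+ A :=
  (Finsupp.liftAddHom (fun g => zmultiplesHom A (v g))).comp
    MonoidAlgebra.coeffAddEquiv.toAddMonoidHom

lemma phi_single (g : SqCl (ZMod 8)) (n : ℤ) :
    phi (MonoidAlgebra.single g n) = n • v g := by
  show (Finsupp.liftAddHom (fun g => zmultiplesHom A (v g))) (Finsupp.single g n) = _
  erw [Finsupp.liftAddHom_apply_single]; rfl

lemma phi_gen (a : (ZMod 8)ˣ) : phi (gen a) = u a := by
  show phi (MonoidAlgebra.single (cls a) 1) = u a
  rw [phi_single, v_cls, one_smul]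

/-! #### Gauss sums -/

noncomputable def zeta : ℂ := Complex.exp (2 * Real.pi * I / 8)

lemma zeta_prim : IsPrimitiveRoot zeta 8 := by
  simpa [zeta] using Complex.isPrimitiveRoot_exp 8 (by norm_num)

lemma zeta_pow8 : zeta ^ 8 = 1 := zeta_prim.pow_eq_one

noncomputable def chi (n : ZMod 8) : ℂ := zeta ^ n.val

lemma chi_add (m n : ZMod 8) : chi (m + n) = chi m * chi n := by
  unfold chi; rw [ZMod.val_add, ← pow_add]
  exact (pow_eq_pow_mod _ zeta_pow8).symm

lemma chi_zero : chi 0 = 1 := by simp [chi]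

lemma chi_four : chi 4 = -1 := by
  have h : (chi 4) ^ 2 = 1 := by
    unfold chi
    rw [← pow_mul]
    have : ZMod.val (4 : ZMod 8) * 2 = 8 := by decide
    rw [this, zeta_pow8]
  have hne : chi 4 ≠ 1 := by
    intro hc
    have : (8 : ℕ) ∣ 4 := by
      have := zeta_prim.pow_eq_one_iff_dvd 4
      exact this.mp (by simpa [chi, show ZMod.val (4 : ZMod 8) = 4 from rfl] using hc)
    norm_num at this
  have h' : (chi 4 - 1) * (chi 4 + 1) = 0 := by ring_nf; linear_combination h
  rcases mul_eq_zero.mp h' with h1 | h2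
  · exact absurd (sub_eq_zero.mp h1) hne
  · exact eq_neg_of_add_eq_zero_left h2

lemma chi_inj {m n : ZMod 8} (h : chi m = chi n) : m = n := by
  have := zeta_prim.pow_inj (ZMod.val_lt m) (ZMod.val_lt n) h
  exact ZMod.val_injective _ this

lemma sum_zmod8 (f : ZMod 8 → ℂ) :
    ∑ t : ZMod 8, f t = f 0 + f 1 + f 2 + f 3 + f 4 + f 5 + f 6 + f 7 := by
  show ∑ t : Fin 8, f t = _
  exact Fin.sum_univ_eight f

/-- Gauss sum of a symmetric matrix over `ZMod 8`. -/
noncomputable def gauss (M : Matrix (Fin 4) (Fin 4) (ZMod 8)) : ℂ :=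
  ∑ x : Fin 4 → ZMod 8, chi (x ⬝ᵥ M.mulVec x)

lemma gauss_congr (Q M : Matrix (Fin 4) (Fin 4) (ZMod 8))
    (hQ : IsUnit Q.det) : gauss (Q * M * Qᵀ) = gauss M := by
  have : Invertible Q := Q.invertibleOfIsUnitDet hQ
  have hT : Invertible Qᵀ := Q.invertibleTranspose
  let e : (Fin 4 → ZMod 8) ≃ (Fin 4 → ZMod 8) :=
    { toFun := Qᵀ.mulVec
      invFun := (⅟Qᵀ).mulVec
      left_inv := fun x => by rw [Matrix.mulVec_mulVec, invOf_mul_self, Matrix.one_mulVec]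
      right_inv := fun x => by rw [Matrix.mulVec_mulVec, mul_invOf_self, Matrix.one_mulVec] }
  unfold gauss
  rw [← Equiv.sum_comp e (fun y => chi (y ⬝ᵥ M.mulVec y))]
  apply Finset.sum_congr rfl
  intro x _
  congr 1
  show x ⬝ᵥ (Q * M * Qᵀ).mulVec x = (Qᵀ.mulVec x) ⬝ᵥ M.mulVec (Qᵀ.mulVec x)
  rw [← Matrix.mulVec_mulVec, ← Matrix.mulVec_mulVec, Matrix.dotProduct_mulVec,
    Matrix.mulVec_transpose]

lemma mul_tbl : ∀ a : (ZMod 8)ˣ, (a:ZMod 8) * 2 * 2 = 4 ∧ (a:ZMod 8) * 3 * 3 = a ∧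
    (a:ZMod 8) * 4 * 4 = 0 ∧ (a:ZMod 8) * 5 * 5 = a ∧ (a:ZMod 8) * 6 * 6 = 4 ∧
    (a:ZMod 8) * 7 * 7 = a := by decide

lemma gauss_one (a : (ZMod 8)ˣ) :
    ∑ t : ZMod 8, chi ((a:ZMod 8) * t * t) = 4 * chi (a:ZMod 8) := by
  obtain ⟨h2, h3, h4, h5, h6, h7⟩ := mul_tbl a
  rw [sum_zmod8 (fun t => chi ((a:ZMod 8) * t * t))]
  rw [show (a:ZMod 8) * 0 * 0 = 0 by ring, show (a:ZMod 8) * 1 * 1 = a by ring,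
    h2, h3, h4, h5, h6, h7, chi_zero, chi_four]
  ring

lemma chi_sum {ι : Type} (s : Finset ι) (f : ι → ZMod 8) :
    chi (∑ i ∈ s, f i) = ∏ i ∈ s, chi (f i) := by
  classical
  induction s using Finset.cons_induction with
  | empty => simp [chi_zero]
  | cons a s ha ih => rw [Finset.sum_cons, Finset.prod_cons, chi_add, ih]

lemma gauss_diag (c : Fin 4 → (ZMod 8)ˣ) :
    gauss (Matrix.diagonal (fun i => (c i : ZMod 8))) = 256 * chi (∑ i, (c i : ZMod 8)) := by
  unfold gauss
  have hdot : ∀ x : Fin 4 → ZMod 8,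
      x ⬝ᵥ (Matrix.diagonal (fun i => (c i : ZMod 8))).mulVec x
        = ∑ i, (c i : ZMod 8) * x i * x i := by
    intro x
    unfold dotProduct
    apply Finset.sum_congr rfl
    intro i _
    rw [Matrix.mulVec_diagonal]
    ring
  calc ∑ x : Fin 4 → ZMod 8, chi (x ⬝ᵥ (Matrix.diagonal (fun i => (c i : ZMod 8))).mulVec x)
      = ∑ x : Fin 4 → ZMod 8, ∏ i, chi ((c i : ZMod 8) * x i * x i) := by
        apply Finset.sum_congr rfl; intro x _; rw [hdot, chi_sum]
    _ = ∏ i, ∑ t : ZMod 8, chi ((c i : ZMod 8) * t * t) :=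
        (Fintype.prod_sum (fun i t => chi ((c i : ZMod 8) * t * t))).symm
    _ = ∏ i : Fin 4, 4 * chi (c i : ZMod 8) := by
        apply Finset.prod_congr rfl; intro i _; rw [gauss_one]
    _ = 256 * chi (∑ i, (c i : ZMod 8)) := by
        rw [chi_sum, Finset.prod_mul_distrib, Finset.prod_const]
        norm_num

/-! #### The invariants of a relation -/

lemma trace_eq {a b : Fin 4 → (ZMod 8)ˣ} {P : Matrix (Fin 4) (Fin 4) (ZMod 8)}
    (hdet : IsUnit P.det)
    (heq : P * Matrix.diagonal (fun i => (a i : ZMod 8)) * P.transpose =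
      Matrix.diagonal (fun i => (b i : ZMod 8))) :
    (∑ i, (a i : ZMod 8)) = ∑ i, (b i : ZMod 8) := by
  have h := gauss_congr P (Matrix.diagonal (fun i => (a i : ZMod 8))) hdet
  rw [heq, gauss_diag, gauss_diag] at h
  exact chi_inj (mul_left_cancel₀ (by norm_num) h.symm)

lemma det_eq {a b : Fin 4 → (ZMod 8)ˣ} {P : Matrix (Fin 4) (Fin 4) (ZMod 8)}
    (hdet : IsUnit P.det)
    (heq : P * Matrix.diagonal (fun i => (a i : ZMod 8)) * P.transpose =
      Matrix.diagonal (fun i => (b i : ZMod 8))) :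
    (∏ i, (a i : ZMod 8)) = ∏ i, (b i : ZMod 8) := by
  have h := congrArg Matrix.det heq
  rw [Matrix.det_mul, Matrix.det_mul, Matrix.det_transpose, Matrix.det_diagonal,
    Matrix.det_diagonal] at h
  obtain ⟨w, hw⟩ := hdet
  have hsq : P.det * P.det = 1 := by
    rw [← hw, ← Units.val_mul, ← sq, unit_sq w, Units.val_one]
  linear_combination h - (∏ i, ((a i : ZMod 8))) * hsq

/-- The combined invariant as a function of trace and determinant. -/
def Fc (t d : ZMod 8) : A :=
  (4, 3 * (((t - 4 - 4 * (if d = 5 ∨ d = 7 then (1:ZMod 8) else 0)).val / 2 : ℕ) : ZMod 4),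
      if d = 5 ∨ d = 7 then 1 else 0)

set_option maxRecDepth 10000 in
lemma keyC1 : ∀ a : Fin 4 → (ZMod 8)ˣ,
    (∑ i, u (a i)) = Fc (∑ i, ((a i : ZMod 8))) (∏ i, ((a i : ZMod 8))) := by decide

lemma phi_rel : ∀ x ∈ gwRel (ZMod 8), phi x = 0 := by
  rintro x ⟨a, b, P, hdet, heq, rfl⟩
  rw [map_sub, map_sum, map_sum]
  simp only [phi_gen]
  rw [keyC1 a, keyC1 b, trace_eq hdet heq, det_eq hdet heq, sub_self]

/-! #### The ideal is contained in the kernel of `phi` -/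

lemma cls_mul (a b : (ZMod 8)ˣ) : cls (a * b) = cls a * cls b := rfl

lemma gwRel_mul (g : SqCl (ZMod 8)) {s : GRing (ZMod 8)} (hs : s ∈ gwRel (ZMod 8)) :
    (MonoidAlgebra.of ℤ (SqCl (ZMod 8)) g) * s ∈ gwRel (ZMod 8) := by
  obtain ⟨w, rfl⟩ := QuotientGroup.mk_surjective g
  obtain ⟨a, b, P, hdet, heq, rfl⟩ := hs
  refine ⟨fun i => w * a i, fun i => w * b i, P, hdet, ?_, ?_⟩
  · have : ∀ c : Fin 4 → (ZMod 8)ˣ,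
        Matrix.diagonal (fun i => ((w * c i : (ZMod 8)ˣ) : ZMod 8))
          = (w : ZMod 8) • Matrix.diagonal (fun i => ((c i : (ZMod 8)ˣ) : ZMod 8)) := by
      intro c
      rw [← Matrix.diagonal_smul]
      congr 1
    rw [this a, this b, ← heq]
    rw [Matrix.mul_smul, Matrix.smul_mul]
  · rw [mul_sub, Finset.mul_sum, Finset.mul_sum]
    congr 1 <;> exact Finset.sum_congr rfl (fun i _ => by
      show _ = gen (w * _)
      unfold gen
      rw [cls_mul]
      exact (_root_.map_mul (MonoidAlgebra.of ℤ (SqCl (ZMod 8))) (cls w) _).symm)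

lemma span_le_ker : ∀ x ∈ Ideal.span (gwRel (ZMod 8)), phi x = 0 := by
  intro x hx
  have main : ∀ x ∈ Ideal.span (gwRel (ZMod 8)), ∀ c : GRing (ZMod 8), phi (c * x) = 0 := by
    intro x hx
    refine Submodule.span_induction
      (p := fun x _ => ∀ c : GRing (ZMod 8), phi (c * x) = 0) ?_ ?_ ?_ ?_ hx
    · intro s hs c
      induction c using MonoidAlgebra.induction_on with
      | of g => exact phi_rel _ (gwRel_mul g hs)
      | add f g hf hg => rw [add_mul, map_add, hf, hg, add_zero]
      | smul r f hf => rw [smul_mul_assoc, map_zsmul, hf, smul_zero]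
    · intro c; rw [mul_zero, map_zero]
    · intro y z _ _ hy hz c
      rw [mul_add, map_add, hy, hz, add_zero]
    · intro a y _ hy c
      rw [smul_eq_mul, ← mul_assoc]
      exact hy (c * a)
  have := main x hx 1
  rwa [one_mul] at this


/-! #### Explicit relations in `GW (ZMod 8)` -/

def u1 : (ZMod 8)ˣ := 1
def u3 : (ZMod 8)ˣ := ZMod.unitOfCoprime 3 (by decide)
def u5 : (ZMod 8)ˣ := ZMod.unitOfCoprime 5 (by decide)
def u7 : (ZMod 8)ˣ := ZMod.unitOfCoprime 7 (by decide)

lemma gw_sum_eq {a b : Fin 4 → (ZMod 8)ˣ} {P : Matrix (Fin 4) (Fin 4) (ZMod 8)}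
    (hdet : IsUnit P.det)
    (heq : P * Matrix.diagonal (fun i => (a i : ZMod 8)) * P.transpose =
      Matrix.diagonal (fun i => (b i : ZMod 8))) :
    (∑ i, gw (a i)) = ∑ i, gw (b i) := by
  have h1 : (∑ i, gw (a i)) = Ideal.Quotient.mk (Ideal.span (gwRel (ZMod 8))) (∑ i, gen (a i)) :=
    (map_sum (Ideal.Quotient.mk (Ideal.span (gwRel (ZMod 8)))) (fun i => gen (a i))
      Finset.univ).symm
  have h2 : (∑ i, gw (b i)) = Ideal.Quotient.mk (Ideal.span (gwRel (ZMod 8))) (∑ i, gen (b i)) :=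
    (map_sum (Ideal.Quotient.mk (Ideal.span (gwRel (ZMod 8)))) (fun i => gen (b i))
      Finset.univ).symm
  rw [h1, h2]
  exact Ideal.Quotient.eq.mpr (Ideal.subset_span ⟨a, b, P, hdet, heq, rfl⟩)

def P1 : Matrix (Fin 4) (Fin 4) (ZMod 8) := !![1,1,1,0; 1,7,0,1; 1,0,7,7; 0,1,7,1]
def P2 : Matrix (Fin 4) (Fin 4) (ZMod 8) := !![1,2,0,0; 2,7,0,0; 0,0,1,0; 0,0,0,1]
def P3 : Matrix (Fin 4) (Fin 4) (ZMod 8) := !![2,1,0,0; 1,2,0,0; 0,0,1,0; 0,0,0,1]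

lemma rel1 : (4 : ℤ) • (gw u1 - gw u3) = 0 := by
  have h := gw_sum_eq (a := ![u1,u1,u1,u1]) (b := ![u3,u3,u3,u3]) (P := P1)
    (by
      have : Invertible P1 := ⟨(3 : ZMod 8) • P1.transpose, by decide, by decide⟩
      exact P1.isUnit_det_of_invertible)
    (by decide)
  rw [Fin.sum_univ_four, Fin.sum_univ_four] at h
  simp only [Matrix.cons_val_zero, Matrix.cons_val_one, Matrix.head_cons,
    Matrix.cons_val_two, Matrix.tail_cons, Matrix.cons_val_three] at h
  have e : (4 : ℤ) • (gw u1 - gw u3)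
      = (gw u1 + gw u1 + gw u1 + gw u1) - (gw u3 + gw u3 + gw u3 + gw u3) := by abel
  rw [e, h, sub_self]

lemma rel2 : (2 : ℤ) • (gw u1 - gw u5) = 0 := by
  have h := gw_sum_eq (a := ![u1,u1,u1,u1]) (b := ![u5,u5,u1,u1]) (P := P2)
    (by
      have : Invertible P2 := ⟨!![5,2,0,0; 2,3,0,0; 0,0,1,0; 0,0,0,1], by decide, by decide⟩
      exact P2.isUnit_det_of_invertible)
    (by decide)
  rw [Fin.sum_univ_four, Fin.sum_univ_four] at h
  simp only [Matrix.cons_val_zero, Matrix.cons_val_one, Matrix.head_cons,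
    Matrix.cons_val_two, Matrix.tail_cons, Matrix.cons_val_three] at h
  have e : (2 : ℤ) • (gw u1 - gw u5)
      = (gw u1 + gw u1 + gw u1 + gw u1) - (gw u5 + gw u5 + gw u1 + gw u1) := by abel
  rw [e, h, sub_self]

lemma rel3 : gw u1 + gw u7 = gw u3 + gw u5 := by
  have h := gw_sum_eq (a := ![u1,u7,u1,u1]) (b := ![u3,u5,u1,u1]) (P := P3)
    (by
      have : Invertible P3 := ⟨!![6,5,0,0; 5,6,0,0; 0,0,1,0; 0,0,0,1], by decide, by decide⟩
      exact P3.isUnit_det_of_invertible)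
    (by decide)
  rw [Fin.sum_univ_four, Fin.sum_univ_four] at h
  simp only [Matrix.cons_val_zero, Matrix.cons_val_one, Matrix.head_cons,
    Matrix.cons_val_two, Matrix.tail_cons, Matrix.cons_val_three] at h
  linear_combination h

/-! #### The map `ψ : ℤ × ZMod 4 × ZMod 2 →+ GW (ZMod 8)` -/

def lift4 : ZMod 4 →+ GW (ZMod 8) :=
  ZMod.lift 4 ⟨zmultiplesHom _ (gw u1 - gw u3), by
    rw [zmultiplesHom_apply, show ((4:ℕ):ℤ) = (4:ℤ) by norm_num]; exact rel1⟩

def lift2 : ZMod 2 →+ GW (ZMod 8) :=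
  ZMod.lift 2 ⟨zmultiplesHom _ (gw u1 - gw u5), by
    rw [zmultiplesHom_apply, show ((2:ℕ):ℤ) = (2:ℤ) by norm_num]; exact rel2⟩

lemma lift4_int (k : ℤ) : lift4 ((k : ZMod 4)) = k • (gw u1 - gw u3) :=
  ZMod.lift_coe _ _ k

lemma lift2_int (k : ℤ) : lift2 ((k : ZMod 2)) = k • (gw u1 - gw u5) :=
  ZMod.lift_coe _ _ k

def psi : A →+ GW (ZMod 8) :=
  AddMonoidHom.coprod (zmultiplesHom (GW (ZMod 8)) (gw u1))
    (AddMonoidHom.coprod lift4 lift2)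

lemma psi_apply (m : ℤ) (x : ZMod 4) (y : ZMod 2) :
    psi (m, x, y) = m • gw u1 + (lift4 x + lift2 y) := rfl

lemma psi_100 : psi (1, 0, 0) = gw u1 := by
  rw [psi_apply, one_smul, lift4.map_zero, lift2.map_zero, add_zero, add_zero]

lemma psi_010 : psi (0, 1, 0) = gw u1 - gw u3 := by
  rw [psi_apply, zero_smul, zero_add, lift2.map_zero, add_zero,
    show (1 : ZMod 4) = ((1 : ℤ) : ZMod 4) by norm_num, lift4_int, one_smul]

lemma psi_001 : psi (0, 0, 1) = gw u1 - gw u5 := by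
  rw [psi_apply, zero_smul, zero_add, lift4.map_zero, zero_add,
    show (1 : ZMod 2) = ((1 : ℤ) : ZMod 2) by norm_num, lift2_int, one_smul]

lemma psi_u3 : psi (1, -1, 0) = gw u3 := by
  rw [psi_apply, lift2.map_zero, add_zero, one_smul,
    show (-1 : ZMod 4) = ((-1 : ℤ) : ZMod 4) by norm_num, lift4_int]
  abel

lemma psi_u5 : psi (1, 0, -1) = gw u5 := by
  rw [psi_apply, lift4.map_zero, zero_add, one_smul,
    show (-1 : ZMod 2) = ((-1 : ℤ) : ZMod 2) by norm_num, lift2_int]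
  abel

lemma psi_u7 : psi (1, -1, -1) = gw u7 := by
  rw [psi_apply, one_smul,
    show (-1 : ZMod 4) = ((-1 : ℤ) : ZMod 4) by norm_num,
    show (-1 : ZMod 2) = ((-1 : ℤ) : ZMod 2) by norm_num, lift4_int, lift2_int]
  have := rel3
  have e : gw u1 + ((-1 : ℤ) • (gw u1 - gw u3) + (-1 : ℤ) • (gw u1 - gw u5))
      = (gw u3 + gw u5) - gw u1 := by abel
  rw [e, ← rel3]
  abel

lemma units_cases : ∀ w : (ZMod 8)ˣ, w = u1 ∨ w = u3 ∨ w = u5 ∨ w = u7 := by decide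

lemma psi_surj : Function.Surjective psi := by
  intro z
  obtain ⟨y, rfl⟩ := Ideal.Quotient.mk_surjective z
  have : ∀ y : GRing (ZMod 8),
      Ideal.Quotient.mk (Ideal.span (gwRel (ZMod 8))) y ∈ AddMonoidHom.range psi := by
    intro y
    induction y using MonoidAlgebra.induction_linear with
    | zero => rw [map_zero]; exact zero_mem _
    | add f g hf hg => rw [map_add]; exact add_mem hf hg
    | single g n =>
      obtain ⟨w, rfl⟩ := QuotientGroup.mk_surjective g
      have hsingle : (MonoidAlgebra.single (QuotientGroup.mk w) n : GRing (ZMod 8))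
          = n • gen w := by
        rw [gen, MonoidAlgebra.of_apply]
        show _ = n • MonoidAlgebra.single (cls w) 1
        rw [MonoidAlgebra.smul_single']
        rw [mul_one]
        rfl
      rw [hsingle, map_zsmul]
      refine zsmul_mem ?_ n
      have : Ideal.Quotient.mk (Ideal.span (gwRel (ZMod 8))) (gen w) = gw w := rfl
      rw [this]
      rcases units_cases w with h | h | h | h <;> subst h
      · exact ⟨(1, 0, 0), psi_100⟩
      · exact ⟨(1, -1, 0), psi_u3⟩
      · exact ⟨(1, 0, -1), psi_u5⟩
      · exact ⟨(1, -1, -1), psi_u7⟩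
  exact this y

lemma u_vals : u u1 = (1, 0, 0) ∧ u u3 = (1, 3, 0) ∧ u u5 = (1, 0, 1) := by decide

lemma psi_inj : Function.Injective psi := by
  rw [injective_iff_map_eq_zero]
  rintro ⟨m, x, y⟩ h
  have hx : ((x.val : ℤ) : ZMod 4) = x := by
    rw [Int.cast_natCast]; exact ZMod.natCast_rightInverse x
  have hy : ((y.val : ℤ) : ZMod 2) = y := by
    rw [Int.cast_natCast]; exact ZMod.natCast_rightInverse y
  set Z : GRing (ZMod 8) :=
    m • gen u1 + ((x.val : ℤ) • (gen u1 - gen u3) + (y.val : ℤ) • (gen u1 - gen u5)) with hZ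
  have hpsi : psi (m, x, y) = Ideal.Quotient.mk (Ideal.span (gwRel (ZMod 8))) Z := by
    rw [psi_apply, ← hx, ← hy, lift4_int, lift2_int, hZ]
    rw [map_add, map_add, map_zsmul, map_zsmul, map_zsmul, map_sub, map_sub]
    rfl
  rw [hpsi] at h
  have hmem : Z ∈ Ideal.span (gwRel (ZMod 8)) := by
    rwa [Ideal.Quotient.eq_zero_iff_mem] at h
  have hphi : phi Z = 0 := span_le_ker Z hmem
  obtain ⟨e1, e3, e5⟩ := u_vals
  rw [hZ, map_add, map_add, map_zsmul, map_zsmul, map_zsmul, map_sub, map_sub,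
    phi_gen, phi_gen, phi_gen, e1, e3, e5] at hphi
  have h2 : ((1,0,0) : A) - (1,3,0) = (0, 1, 0) := by decide
  have h3 : ((1,0,0) : A) - (1,0,1) = (0, 0, 1) := by decide
  rw [h2, h3] at hphi
  have : ((m, (x.val : ℤ) • (1 : ZMod 4), (y.val : ℤ) • (1 : ZMod 2)) : A) = 0 := by
    rw [← hphi]
    show _ = (m • ((1,0,0) : A) + ((x.val : ℤ) • ((0,1,0) : A) + (y.val : ℤ) • ((0,0,1) : A)))
    simp [Prod.ext_iff]
  rw [Prod.ext_iff, Prod.ext_iff] at this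
  obtain ⟨hm, hx2, hy2⟩ := this
  refine Prod.ext ?_ (Prod.ext ?_ ?_)
  · simpa using hm
  · show x = 0
    rw [← hx]
    simpa [zsmul_eq_mul, hx] using hx2
  · show y = 0
    rw [← hy]
    simpa [zsmul_eq_mul, hy] using hy2

end GW8

/-- `GW(ℤ/8) ≅ ℤ × ℤ/4 × ℤ/2` as abelian groups, via `(1,0,0) ↦ [1]`,
`(0,1,0) ↦ ⟨⟨3⟩⟩ = [1] − [3]` and `(0,0,1) ↦ ⟨⟨5⟩⟩ = [1] − [5]`. -/
theorem gw_zmod_eight :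
    ∃ e : ℤ × ZMod 4 × ZMod 2 ≃+ GW (ZMod 8),
      e (1, 0, 0) = gw 1 ∧
      e (0, 1, 0) = gw 1 - gw (ZMod.unitOfCoprime 3 (by decide)) ∧
      e (0, 0, 1) = gw 1 - gw (ZMod.unitOfCoprime 5 (by decide)) := by
  refine ⟨AddEquiv.ofBijective GW8.psi ⟨GW8.psi_inj, GW8.psi_surj⟩, ?_, ?_, ?_⟩
  · exact GW8.psi_100
  · exact GW8.psi_010
  · exact GW8.psi_001

end
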